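/- ∫₀^∞ ∫_{−z}^{z} dw/(1+2z+w²)² dz, computed as an iterated integral, equals 1. -/

import Mathlib

open MeasureTheory Real

lemma hasDerivAt_h (s : ℝ) (hs : 0 < s) (w : ℝ) :
    HasDerivAt (fun w => w / (2*s^2*(s^2 + w^2)) + Real.arctan (w / s) / (2*s^2*s))
      (((s^2 + w^2)^2)⁻¹) w := by
  have haw : 0 < s^2 + w^2 := by positivity
  have h1 : HasDerivAt (fun w : ℝ => w / (2*s^2*(s^2 + w^2)))
      ((1 * (2*s^2*(s^2 + w^2)) - w * (2*s^2*(2*w))) / (2*s^2*(s^2 + w^2))^2) w := by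
    have hd : HasDerivAt (fun w : ℝ => 2*s^2*(s^2 + w^2)) (2*s^2*(2*w)) w := by
      have : HasDerivAt (fun w : ℝ => s^2 + w^2) (2*w) w := by
        simpa using (hasDerivAt_pow 2 w).const_add (s^2)
      exact this.const_mul (2*s^2)
    exact (hasDerivAt_id' w).div hd (by positivity)
  have h2 : HasDerivAt (fun w : ℝ => Real.arctan (w / s) / (2*s^2*s))
      ((1 / (1 + (w / s)^2) * (1 / s)) / (2*s^2*s)) w := by
    have hq : HasDerivAt (fun w : ℝ => w / s) (1 / s) w := by
      simpa using (hasDerivAt_id w).div_const s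
    exact ((Real.hasDerivAt_arctan (w / s)).comp w hq).div_const _
  have := h1.add h2
  refine this.congr_deriv ?_
  have h3 : 1 + (w / s)^2 = (s^2 + w^2) / s^2 := by
    field_simp
  rw [h3]
  field_simp
  ring

noncomputable def Efun (z : ℝ) : ℝ :=
  z / ((1 + 2*z) * ((1 + 2*z) + z^2)) +
    Real.arctan (z / Real.sqrt (1 + 2*z)) / ((1 + 2*z) * Real.sqrt (1 + 2*z))

noncomputable def Gfun (z : ℝ) : ℝ :=
  -(1 + z)⁻¹ - Real.arctan (z / Real.sqrt (1 + 2*z)) / Real.sqrt (1 + 2*z)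

lemma inner_eq (z : ℝ) (hz : 0 ≤ z) :
    (∫ w in (-z)..z, ((1 + 2*z + w^2)^2)⁻¹) = Efun z := by
  have h1 : (0:ℝ) < 1 + 2*z := by linarith
  set s := Real.sqrt (1 + 2*z) with hsdef
  have hs0 : 0 < s := Real.sqrt_pos.2 h1
  have hsq : s^2 = 1 + 2*z := Real.sq_sqrt h1.le
  have hint : (∫ w in (-z)..z, ((s^2 + w^2)^2)⁻¹)
      = (z / (2*s^2*(s^2 + z^2)) + Real.arctan (z / s) / (2*s^2*s))
        - ((-z) / (2*s^2*(s^2 + (-z)^2)) + Real.arctan ((-z) / s) / (2*s^2*s)) := by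
    apply intervalIntegral.integral_eq_sub_of_hasDerivAt
    · intro x _; exact hasDerivAt_h s hs0 x
    · exact (((continuous_const.add (continuous_pow 2)).pow 2).inv₀
        (fun w => by dsimp; positivity)).intervalIntegrable _ _
  calc (∫ w in (-z)..z, ((1 + 2*z + w^2)^2)⁻¹)
      = ∫ w in (-z)..z, ((s^2 + w^2)^2)⁻¹ := by rw [hsq]
    _ = Efun z := by
        rw [hint, Efun, ← hsdef, ← hsq, show (-z)/s = -(z/s) from neg_div _ _, Real.arctan_neg]
        have hz2 : (0:ℝ) < s^2 + z^2 := by positivity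
        field_simp
        ring

lemma Efun_nonneg (z : ℝ) (hz : 0 ≤ z) : 0 ≤ Efun z := by
  have h1 : (0:ℝ) < 1 + 2*z := by linarith
  have hs0 : 0 < Real.sqrt (1 + 2*z) := Real.sqrt_pos.2 h1
  have harc : 0 ≤ Real.arctan (z / Real.sqrt (1 + 2*z)) := by
    rw [← Real.arctan_zero]
    exact Real.arctan_strictMono.monotone (by positivity)
  have : (0:ℝ) < (1 + 2*z) + z^2 := by positivity
  apply add_nonneg
  · positivity
  · positivity

lemma hasDerivAt_G (z : ℝ) (hz : 0 ≤ z) : HasDerivAt Gfun (Efun z) z := by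
  have h1 : (0:ℝ) < 1 + 2*z := by linarith
  have h1z : (0:ℝ) < 1 + z := by linarith
  set s := Real.sqrt (1 + 2*z) with hsdef
  have hs0 : 0 < s := Real.sqrt_pos.2 h1
  have hsq : s^2 = 1 + 2*z := Real.sq_sqrt h1.le
  have hsqrt : HasDerivAt (fun z : ℝ => Real.sqrt (1 + 2*z)) (1/(2*s) * 2) z := by
    have hlin : HasDerivAt (fun z : ℝ => 1 + 2*z) 2 z := by
      simpa using ((hasDerivAt_id z).const_mul 2).const_add 1
    exact (Real.hasDerivAt_sqrt h1.ne').comp z hlin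
  have hq : HasDerivAt (fun z : ℝ => z / Real.sqrt (1 + 2*z))
      ((1 * s - z * (1/(2*s) * 2)) / s^2) z :=
    (hasDerivAt_id z).div hsqrt hs0.ne'
  have harc : HasDerivAt (fun z : ℝ => Real.arctan (z / Real.sqrt (1 + 2*z)))
      (1 / (1 + (z / s)^2) * ((1 * s - z * (1/(2*s) * 2)) / s^2)) z :=
    HasDerivAt.comp (h₂ := Real.arctan) z (Real.hasDerivAt_arctan (z / s)) hq
  have hdivs : HasDerivAt
      (fun z : ℝ => Real.arctan (z / Real.sqrt (1 + 2*z)) / Real.sqrt (1 + 2*z))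
      ((1 / (1 + (z / s)^2) * ((1 * s - z * (1/(2*s) * 2)) / s^2) * s
        - Real.arctan (z / s) * (1/(2*s) * 2)) / s^2) z :=
    harc.div hsqrt hs0.ne'
  have hinv : HasDerivAt (fun z : ℝ => -(1 + z)⁻¹) (-(-1 / (1 + z)^2)) z := by
    have : HasDerivAt (fun z : ℝ => 1 + z) 1 z := by
      simpa using (hasDerivAt_id z).const_add 1
    exact (this.inv h1z.ne').neg
  have := hinv.sub hdivs
  refine this.congr_deriv ?_
  rw [Efun, ← hsdef, ← hsq]
  have hz2 : (0:ℝ) < s^2 + z^2 := by positivity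
  have h1q : 1 + (z/s)^2 = (s^2 + z^2)/s^2 := by field_simp
  rw [h1q]
  have h1zs : (1 + z)^2 = s^2 + z^2 := by rw [hsq]; ring
  field_simp [h1zs]
  linear_combination s^3 * hsq

lemma tendsto_G : Filter.Tendsto Gfun Filter.atTop (nhds 0) := by
  have hs : Filter.Tendsto (fun z : ℝ => Real.sqrt (1 + 2*z)) Filter.atTop Filter.atTop := by
    have hroot : Filter.Tendsto Real.sqrt Filter.atTop Filter.atTop := by
      apply Filter.tendsto_atTop_atTop_of_monotone (fun a b h => Real.sqrt_le_sqrt h)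
      intro b
      refine ⟨(b ⊔ 0)^2, ?_⟩
      rw [Real.sqrt_sq le_sup_right]
      exact le_sup_left
    apply hroot.comp
    apply Filter.tendsto_atTop_add_const_left
    exact Filter.Tendsto.const_mul_atTop two_pos Filter.tendsto_id
  have h2 : Filter.Tendsto
      (fun z : ℝ => Real.arctan (z / Real.sqrt (1 + 2*z)) / Real.sqrt (1 + 2*z))
      Filter.atTop (nhds 0) := by
    apply squeeze_zero_norm' (a := fun z : ℝ => (π/2) * (Real.sqrt (1 + 2*z))⁻¹)
    · filter_upwards [Filter.eventually_ge_atTop (0:ℝ)] with z hz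
      have h1 : (0:ℝ) < 1 + 2*z := by linarith
      have hs0 : 0 < Real.sqrt (1 + 2*z) := Real.sqrt_pos.2 h1
      have harc : |Real.arctan (z / Real.sqrt (1 + 2*z))| ≤ π/2 :=
        abs_le.2 ⟨(Real.neg_pi_div_two_lt_arctan _).le, (Real.arctan_lt_pi_div_two _).le⟩
      rw [norm_div, Real.norm_eq_abs, Real.norm_eq_abs, abs_of_pos hs0, div_eq_mul_inv]
      exact mul_le_mul_of_nonneg_right harc (by positivity)
    · simpa using hs.inv_tendsto_atTop.const_mul (π/2)
  have h1 : Filter.Tendsto (fun z : ℝ => -(1 + z)⁻¹) Filter.atTop (nhds 0) := by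
    have : Filter.Tendsto (fun z : ℝ => (1 + z)⁻¹) Filter.atTop (nhds 0) :=
      (Filter.tendsto_atTop_add_const_left _ 1 Filter.tendsto_id).inv_tendsto_atTop
    simpa using this.neg
  have := h1.sub h2
  rw [sub_zero] at this
  exact this

/-- ∫₀^∞ ∫_{−z}^{z} dw/(1+2z+w²)² dz = 1 as an iterated integral. -/
theorem iterated_integral_charge :
    ∫ z in Set.Ioi (0 : ℝ), (∫ w in (-z)..z, ((1 + 2 * z + w ^ 2) ^ 2)⁻¹) = 1 := by
  rw [MeasureTheory.setIntegral_congr_fun measurableSet_Ioi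
    (fun z hz => inner_eq z (le_of_lt hz))]
  rw [integral_Ioi_of_hasDerivAt_of_nonneg' (fun x hx => hasDerivAt_G x hx)
    (fun x hx => Efun_nonneg x (le_of_lt hx)) tendsto_G]
  norm_num [Gfun]
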